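/- arXiv:2208.03892 — 2 statements merged into one kernel-verified Lean document; each statement's English description precedes it below -/
import Mathlib

section
/- Let \varphi be an analytic self-map of the unit disk with \varphi \in S^p and \|\varphi\|_\infty < 1. Then D_\varphi: S^p \to S^p is compact: whenever (f_n) is a bounded sequence in S^p converging to 0 uniformly on compact subsets of the disk, \|D_\varphi f_n\|_{S^p} \to 0. -/
open Metric Complex Filter

/-- The `p`-th power mean of `|g|^p` on the circle of radius `r`. -/
noncomputable def hpInt (p : ℝ) (g : ℂ → ℂ) (r : ℝ) : ℝ :=
  ∫ θ in (0 : ℝ)..(2 * Real.pi), ‖g (r * Complex.exp (θ * Complex.I))‖ ^ p / (2 * Real.pi)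

/-- Membership in the Hardy space `H^p`. -/
def MemHp (p : ℝ) (g : ℂ → ℂ) : Prop :=
  DifferentiableOn ℂ g (ball 0 1) ∧ BddAbove (hpInt p g '' Set.Ioo (0 : ℝ) 1)

/-- The `H^p` norm. -/
noncomputable def hpNorm (p : ℝ) (g : ℂ → ℂ) : ℝ :=
  (sSup (hpInt p g '' Set.Ioo (0 : ℝ) 1)) ^ (1 / p)

/-- Membership in `S^p`: `f` analytic on the disk with `f' ∈ H^p`. -/
def MemSp (p : ℝ) (f : ℂ → ℂ) : Prop :=
  DifferentiableOn ℂ f (ball 0 1) ∧ MemHp p (deriv f)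

/-- The `S^p` norm `‖f‖ = |f(0)| + ‖f'‖_{H^p}`. -/
noncomputable def spNorm (p : ℝ) (f : ℂ → ℂ) : ℝ :=
  ‖f 0‖ + hpNorm p (deriv f)

lemma hpInt_nonneg (p : ℝ) (g : ℂ → ℂ) (r : ℝ) : 0 ≤ hpInt p g r := by
  apply intervalIntegral.integral_nonneg (by positivity)
  intro θ _
  positivity

lemma hpInt_mono (p : ℝ) (hp : 0 < p) (u v : ℂ → ℂ) (δ : ℝ) (hδ : 0 ≤ δ)
    (r : ℝ) (hr : r ∈ Set.Ioo (0 : ℝ) 1)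
    (hu : ContinuousOn u (ball 0 1)) (hv : ContinuousOn v (ball 0 1))
    (hbound : ∀ z ∈ ball (0 : ℂ) 1, ‖u z‖ ≤ δ * ‖v z‖) :
    hpInt p u r ≤ δ ^ p * hpInt p v r := by
  have hmem : ∀ θ : ℝ, (r : ℂ) * Complex.exp (θ * Complex.I) ∈ ball (0 : ℂ) 1 := by
    intro θ
    simp [mem_ball, Complex.norm_exp, _root_.abs_of_nonneg hr.1.le, hr.2]
  have hz : Continuous fun θ : ℝ => (r : ℂ) * Complex.exp (θ * Complex.I) :=
    continuous_const.mul ((Complex.continuous_ofReal.mul continuous_const).cexp)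
  have hic : ∀ w : ℂ → ℂ, ContinuousOn w (ball 0 1) →
      IntervalIntegrable (fun θ => ‖w ((r : ℂ) * Complex.exp (θ * Complex.I))‖ ^ p / (2 * Real.pi))
        MeasureTheory.volume 0 (2 * Real.pi) := by
    intro w hw
    apply ContinuousOn.intervalIntegrable
    apply ContinuousOn.div_const
    apply ContinuousOn.rpow_const
    · exact ((hw.comp hz.continuousOn (fun θ _ => hmem θ)).norm)
    · intro θ _; right; exact hp.le
  have key : hpInt p u r ≤ ∫ θ in (0:ℝ)..(2*Real.pi),
      δ ^ p * (‖v ((r : ℂ) * Complex.exp (θ * Complex.I))‖ ^ p / (2 * Real.pi)) := by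
    apply intervalIntegral.integral_mono_on (by positivity) (hic u hu)
    · exact (hic v hv).const_mul _
    · intro θ _
      have h1 : ‖u ((r : ℂ) * Complex.exp (θ * Complex.I))‖ ^ p ≤
          δ ^ p * ‖v ((r : ℂ) * Complex.exp (θ * Complex.I))‖ ^ p := by
        rw [← Real.mul_rpow hδ (norm_nonneg _)]
        exact Real.rpow_le_rpow (norm_nonneg _) (hbound _ (hmem θ)) hp.le
      have h2 : (0:ℝ) < 2 * Real.pi := by positivity
      rw [← mul_div_assoc]
      gcongr
  rw [intervalIntegral.integral_const_mul] at key
  exact key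

/-- If `φ` is an analytic self-map of the disk with `φ ∈ S^p` and `‖φ‖_∞ < 1`, then
`D_φ : S^p → S^p` is compact: for any bounded sequence in `S^p` tending to `0`
uniformly on compact subsets of the disk, `‖D_φ fₙ‖_{S^p} → 0`. -/
theorem stmt4 (p : ℝ) (hp : 1 < p) (φ : ℂ → ℂ)
    (hφan : DifferentiableOn ℂ φ (ball 0 1))
    (hφmap : Set.MapsTo φ (ball 0 1) (ball 0 1))
    (hφSp : MemSp p φ)
    (M : ℝ) (hM : M < 1) (hφsup : ∀ z ∈ ball (0 : ℂ) 1, ‖φ z‖ ≤ M)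
    (f : ℕ → ℂ → ℂ) (hfSp : ∀ n, MemSp p (f n))
    (hbdd : ∃ B : ℝ, ∀ n, spNorm p (f n) ≤ B)
    (hunif : ∀ K : Set ℂ, K ⊆ ball 0 1 → IsCompact K →
      TendstoUniformlyOn f 0 atTop K) :
    Tendsto (fun n => spNorm p (fun z => deriv (f n) (φ z))) atTop (nhds 0) := by
  have hp0 : (0:ℝ) < p := lt_trans one_pos hp
  have h0ball : (0:ℂ) ∈ ball (0:ℂ) 1 := by simp
  have hφ0 : φ 0 ∈ ball (0:ℂ) 1 := hφmap h0ball
  have hM0 : 0 ≤ M := (norm_nonneg _).trans (hφsup 0 h0ball)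
  have hKsub : closedBall (0:ℂ) M ⊆ ball 0 1 := closedBall_subset_ball hM
  have hder0 : deriv (0 : ℂ → ℂ) = 0 := by funext x; rw [Pi.zero_def, deriv_const]
  -- locally uniform convergence of f, f', f''
  have hLU : TendstoLocallyUniformlyOn f 0 atTop (ball 0 1) :=
    (tendstoLocallyUniformlyOn_iff_forall_isCompact isOpen_ball).2
      fun K hK hKc => hunif K hK hKc
  have hd1 : TendstoLocallyUniformlyOn (deriv ∘ f) 0 atTop (ball 0 1) := by
    have := hLU.deriv (Eventually.of_forall fun n => (hfSp n).1) isOpen_ball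
    rwa [hder0] at this
  have hfan : ∀ n, AnalyticOnNhd ℂ (f n) (ball 0 1) :=
    fun n => (hfSp n).1.analyticOnNhd isOpen_ball
  have hd2 : TendstoLocallyUniformlyOn (deriv ∘ (deriv ∘ f)) 0 atTop (ball 0 1) := by
    have := hd1.deriv (Eventually.of_forall fun n =>
      ((hfan n).deriv).differentiableOn) isOpen_ball
    rwa [hder0] at this
  -- first summand → 0
  have ha : Tendsto (fun n => ‖deriv (f n) (φ 0)‖) atTop (nhds 0) := by
    have := (hd1.tendsto_at hφ0).norm
    simpa using this
  -- chain rule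
  have hchain : ∀ n, ∀ z ∈ ball (0:ℂ) 1,
      deriv (fun w => deriv (f n) (φ w)) z = deriv (deriv (f n)) (φ z) * deriv φ z := by
    intro n z hz
    have hφz : HasDerivAt φ (deriv φ z) z :=
      (hφan.differentiableAt (isOpen_ball.mem_nhds hz)).hasDerivAt
    have hfz : HasDerivAt (deriv (f n)) (deriv (deriv (f n)) (φ z)) (φ z) :=
      (((hfan n).deriv).differentiableOn.differentiableAt
        (isOpen_ball.mem_nhds (hφmap hz))).hasDerivAt
    exact (hfz.comp z hφz).deriv
  -- continuity facts
  have hφ'c : ContinuousOn (deriv φ) (ball 0 1) :=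
    ((hφan.analyticOnNhd isOpen_ball).deriv).continuousOn
  have hgdiff : ∀ n, DifferentiableOn ℂ (fun w => deriv (f n) (φ w)) (ball 0 1) :=
    fun n => (((hfan n).deriv).differentiableOn).comp hφan hφmap
  have hg'c : ∀ n, ContinuousOn (deriv (fun w => deriv (f n) (φ w))) (ball 0 1) :=
    fun n => (((hgdiff n).analyticOnNhd isOpen_ball).deriv).continuousOn
  -- constant C
  set C := sSup (hpInt p (deriv φ) '' Set.Ioo (0:ℝ) 1) with hCdef
  have hCub : ∀ r ∈ Set.Ioo (0:ℝ) 1, hpInt p (deriv φ) r ≤ C :=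
    fun r hr => le_csSup hφSp.2.2 (Set.mem_image_of_mem _ hr)
  have hC0 : 0 ≤ C := (hpInt_nonneg p (deriv φ) (1/2)).trans
    (hCub (1/2) (by norm_num))
  -- second summand → 0
  have hb : Tendsto (fun n => hpNorm p (deriv (fun w => deriv (f n) (φ w)))) atTop (nhds 0) := by
    rw [NormedAddCommGroup.tendsto_nhds_zero]
    intro ε hε
    set δ := ε / (2 * (C ^ (1/p) + 1)) with hδdef
    have hδpos : 0 < δ := by positivity
    have hu2 : TendstoUniformlyOn (deriv ∘ (deriv ∘ f)) 0 atTop (closedBall (0:ℂ) M) :=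
      (tendstoLocallyUniformlyOn_iff_forall_isCompact isOpen_ball).1 hd2
        (closedBall 0 M) hKsub (isCompact_closedBall _ _)
    have hev := (Metric.tendstoUniformlyOn_iff.1 hu2) δ hδpos
    filter_upwards [hev] with n hn
    have hbnd : ∀ z ∈ ball (0:ℂ) 1,
        ‖deriv (fun w => deriv (f n) (φ w)) z‖ ≤ δ * ‖deriv φ z‖ := by
      intro z hz
      rw [hchain n z hz, norm_mul]
      have hφzK : φ z ∈ closedBall (0:ℂ) M := by
        simpa [mem_closedBall, dist_eq_norm] using hφsup z hz
      have h3 : ‖deriv (deriv (f n)) (φ z)‖ < δ := by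
        simpa [dist_eq_norm] using hn (φ z) hφzK
      exact mul_le_mul_of_nonneg_right h3.le (norm_nonneg _)
    have hsup : ∀ r ∈ Set.Ioo (0:ℝ) 1,
        hpInt p (deriv (fun w => deriv (f n) (φ w))) r ≤ δ ^ p * C := by
      intro r hr
      calc hpInt p (deriv (fun w => deriv (f n) (φ w))) r
          ≤ δ ^ p * hpInt p (deriv φ) r :=
            hpInt_mono p hp0 _ _ δ hδpos.le r hr (hg'c n) hφ'c hbnd
        _ ≤ δ ^ p * C := by
            exact mul_le_mul_of_nonneg_left (hCub r hr) (Real.rpow_nonneg hδpos.le p)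
    have hSle : sSup (hpInt p (deriv (fun w => deriv (f n) (φ w))) '' Set.Ioo (0:ℝ) 1)
        ≤ δ ^ p * C := by
      apply Real.sSup_le
      · rintro x ⟨r, hr, rfl⟩
        exact hsup r hr
      · positivity
    have hS0 : 0 ≤ sSup (hpInt p (deriv (fun w => deriv (f n) (φ w))) '' Set.Ioo (0:ℝ) 1) :=
      Real.sSup_nonneg (by rintro x ⟨r, hr, rfl⟩; exact hpInt_nonneg _ _ _)
    have hnorm : hpNorm p (deriv (fun w => deriv (f n) (φ w))) ≤ δ * C ^ (1/p) := by
      rw [hpNorm]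
      calc (sSup (hpInt p (deriv (fun w => deriv (f n) (φ w))) '' Set.Ioo (0:ℝ) 1)) ^ (1/p)
          ≤ (δ ^ p * C) ^ (1/p) := Real.rpow_le_rpow hS0 hSle (by positivity)
        _ = δ * C ^ (1/p) := by
            rw [Real.mul_rpow (Real.rpow_nonneg hδpos.le p) hC0, one_div,
              Real.rpow_rpow_inv hδpos.le (ne_of_gt hp0)]
    have hfin : δ * C ^ (1/p) < ε := by
      rw [hδdef]
      have h1 : C ^ (1/p) < C ^ (1/p) + 1 := lt_add_one _
      have h2 : 0 < C ^ (1/p) + 1 := by positivity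
      calc ε / (2 * (C ^ (1/p) + 1)) * C ^ (1/p)
          ≤ ε / (2 * (C ^ (1/p) + 1)) * (C ^ (1/p) + 1) := by
            apply mul_le_mul_of_nonneg_left h1.le (by positivity)
        _ = ε / 2 := by field_simp
        _ < ε := by linarith
    have hpn0 : 0 ≤ hpNorm p (deriv (fun w => deriv (f n) (φ w))) := by
      rw [hpNorm]; exact Real.rpow_nonneg hS0 _
    rw [Real.norm_eq_abs, _root_.abs_of_nonneg hpn0]
    exact lt_of_le_of_lt hnorm hfin
  have := ha.add hb
  rw [add_zero] at this
  exact this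
end

section
/- Let \varphi(z) = a z^M on S^2 with 0 < |a| \leq 1/M and M \geq 2. Then \|D_\varphi\| = 1; moreover \|D_\varphi\| > 1 whenever 1/M < |a| < 1. -/
open Metric

/-- `f` has Taylor coefficients `c` on the unit disk. -/
def HasCoeffs (f : ℂ → ℂ) (c : ℕ → ℂ) : Prop :=
  ∀ z : ℂ, ‖z‖ < 1 → HasSum (fun n : ℕ => c n * z ^ n) (f z)

/-- The square of the `S²` norm, in terms of Taylor coefficients. -/
noncomputable def S2sq (c : ℕ → ℂ) : ℝ :=
  ‖c 0‖ ^ 2 + ∑' n : ℕ, (n : ℝ) ^ 2 * ‖c n‖ ^ 2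

lemma hasFPS {h : ℂ → ℂ} {c : ℕ → ℂ} (hc : HasCoeffs h c) :
    HasFPowerSeriesOnBall h (FormalMultilinearSeries.ofScalars ℂ c) 0 1 := by
  constructor
  · refine ENNReal.le_of_forall_nnreal_lt fun r hr =>
      FormalMultilinearSeries.le_radius_of_summable _ ?_
    have hr' : (r : ℝ) < 1 := by exact_mod_cast hr
    have h1 : ‖((r : ℝ) : ℂ)‖ < 1 := by
      rw [Complex.norm_real, Real.norm_eq_abs, abs_of_nonneg r.coe_nonneg]; exact hr'
    have h2 := summable_norm_iff.mpr (hc _ h1).summable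
    refine h2.congr fun n => ?_
    rw [FormalMultilinearSeries.ofScalars_norm, norm_mul, norm_pow, Complex.norm_real,
      Real.norm_eq_abs, abs_of_nonneg r.coe_nonneg]
  · norm_num
  · intro y hy
    have hy' : ‖y‖ < 1 := by
      rw [EMetric.mem_ball, edist_zero_right] at hy
      rw [enorm_eq_nnnorm] at hy; exact_mod_cast hy
    simp only [FormalMultilinearSeries.ofScalars_apply_eq, smul_eq_mul, zero_add]
    exact hc y hy'

lemma coeffs_unique {h : ℂ → ℂ} {c d : ℕ → ℂ} (hc : HasCoeffs h c) (hd : HasCoeffs h d) :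
    c = d :=
  FormalMultilinearSeries.ofScalars_series_injective ℂ ℂ
    ((hasFPS hc).hasFPowerSeriesAt.eq_formalMultilinearSeries (hasFPS hd).hasFPowerSeriesAt)

lemma hasSum_deriv {f : ℂ → ℂ} {c : ℕ → ℂ} (hf : HasCoeffs f c)
    (hc2 : Summable fun n : ℕ => (n : ℝ) ^ 2 * ‖c n‖ ^ 2) {z : ℂ} (hz : ‖z‖ < 1) :
    HasSum (fun n : ℕ => ((n : ℂ) + 1) * c (n + 1) * z ^ n) (deriv f z) := by
  set r : ℝ := (‖z‖ + 1) / 2 with hrdef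
  have hzr : ‖z‖ < r := by rw [hrdef]; linarith
  have hr0 : 0 < r := lt_of_le_of_lt (norm_nonneg z) hzr
  have hr1 : r < 1 := by rw [hrdef]; linarith
  set u : ℕ → ℝ := fun n => (n : ℝ) * ‖c n‖ * r ^ (n - 1) with hu
  have hugeom : Summable fun n : ℕ => r ^ (n - 1) := by
    rw [← summable_nat_add_iff 1]
    simpa using summable_geometric_of_lt_one hr0.le hr1
  have husum : Summable u := by
    refine Summable.of_nonneg_of_le (fun n => by positivity) (fun n => ?_) (hc2.add hugeom)
    show (n : ℝ) * ‖c n‖ * r ^ (n - 1) ≤ (n : ℝ) ^ 2 * ‖c n‖ ^ 2 + r ^ (n - 1)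
    have h2 : (0:ℝ) ≤ r ^ (n - 1) := by positivity
    have h3 : r ^ (n - 1) ≤ 1 := pow_le_one₀ hr0.le hr1.le
    have h4 : (0:ℝ) ≤ (n : ℝ) * ‖c n‖ := by positivity
    nlinarith [sq_nonneg ((n : ℝ) * ‖c n‖ - r ^ (n - 1))]
  set g' : ℕ → ℂ → ℂ := fun n y => (n : ℂ) * c n * y ^ (n - 1) with hg'def
  have hgderiv : ∀ n : ℕ, ∀ y ∈ Metric.ball (0 : ℂ) r,
      HasDerivAt (fun w => c n * w ^ n) (g' n y) y := by
    intro n y _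
    have := (hasDerivAt_pow n y).const_mul (c n)
    rw [show g' n y = c n * (↑n * y ^ (n - 1)) by rw [hg'def]; ring]; exact this
  have hbound : ∀ n : ℕ, ∀ y ∈ Metric.ball (0 : ℂ) r, ‖g' n y‖ ≤ u n := by
    intro n y hy
    rw [mem_ball_zero_iff] at hy
    have h1 : ‖g' n y‖ = (n : ℝ) * ‖c n‖ * ‖y‖ ^ (n - 1) := by
      rw [hg'def]; simp [norm_mul, norm_pow]
    rw [h1]
    show _ ≤ (n : ℝ) * ‖c n‖ * r ^ (n - 1)
    gcongr
  have hsum0 : Summable fun n : ℕ => c n * (0 : ℂ) ^ n := by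
    apply summable_of_ne_finset_zero (s := {0})
    intro n hn
    simp only [Finset.mem_singleton] at hn
    simp [zero_pow hn]
  have key := hasDerivAt_tsum_of_isPreconnected husum isOpen_ball
      (convex_ball (0 : ℂ) r).isPreconnected hgderiv hbound (mem_ball_self hr0) hsum0
      (mem_ball_zero_iff.mpr hzr)
  have heq : f =ᶠ[nhds z] fun w => ∑' n : ℕ, c n * w ^ n := by
    filter_upwards [IsOpen.mem_nhds isOpen_ball (mem_ball_zero_iff.mpr hz)] with w hw
    exact ((hf w (mem_ball_zero_iff.mp hw)).tsum_eq).symm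
  have hder : HasDerivAt f (∑' n : ℕ, g' n z) z := key.congr_of_eventuallyEq heq
  have hsummz : Summable fun n => g' n z :=
    Summable.of_norm_bounded husum (fun n => hbound n z (mem_ball_zero_iff.mpr hzr))
  have hhs : HasSum (fun n => g' n z) (∑' n : ℕ, g' n z) := hsummz.hasSum
  have hshift : HasSum (fun n => g' (n + 1) z) (∑' n : ℕ, g' n z) := by
    apply (hasSum_nat_add_iff (f := fun n => g' n z) 1).mpr
    simpa [hg'def] using hhs
  have hfun : (fun n => g' (n + 1) z) = fun n : ℕ => ((n : ℂ) + 1) * c (n + 1) * z ^ n := by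
    funext n
    rw [hg'def]
    simp only [Nat.add_sub_cancel]
    push_cast
    ring
  rw [hder.deriv]
  rw [← hfun]
  exact hshift

lemma aux_nat (M : ℕ) (hM : 2 ≤ M) : ∀ n, 1 ≤ n → M * n ≤ M ^ n := by
  intro n hn
  induction n with
  | zero => omega
  | succ k ih =>
    rcases Nat.eq_zero_or_pos k with h | h
    · subst h; simp
    · have h1 : M * k ≤ M ^ k := ih h
      have h2 : M ≤ M ^ k := Nat.le_self_pow (by omega) M
      have h3 : 2 * M ^ k ≤ M * M ^ k := Nat.mul_le_mul_right _ hM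
      calc M * (k + 1) = M * k + M := by ring
        _ ≤ M ^ k + M ^ k := Nat.add_le_add h1 h2
        _ = 2 * M ^ k := by ring
        _ ≤ M * M ^ k := h3
        _ = M ^ (k + 1) := by ring

lemma key_le {a : ℂ} {M : ℕ} (hM : 2 ≤ M) (ha : ‖a‖ < 1) (haM : ‖a‖ ≤ 1 / (M : ℝ))
    (f : ℂ → ℂ) (c d : ℕ → ℂ) (hf : HasCoeffs f c)
    (hc2 : Summable fun n : ℕ => (n : ℝ) ^ 2 * ‖c n‖ ^ 2)
    (hd : HasCoeffs (fun z => deriv f (a * z ^ M)) d) :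
    S2sq d ≤ S2sq c := by
  have hM0 : 0 < M := by omega
  set e : ℕ → ℂ := fun n => ((n : ℂ) + 1) * c (n + 1) with he
  set D : ℕ → ℂ := fun k => if M ∣ k then e (k / M) * a ^ (k / M) else 0 with hD
  have hinj : Function.Injective fun n : ℕ => M * n := fun m n h => by
    simpa [Nat.mul_left_cancel_iff hM0] using h
  have hrange : ∀ k : ℕ, k ∈ Set.range (fun n : ℕ => M * n) ↔ M ∣ k := by
    intro k; simp [Set.mem_range, Dvd.dvd, eq_comm]
  have hDcoeffs : HasCoeffs (fun z => deriv f (a * z ^ M)) D := by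
    intro z hz
    have hw : ‖a * z ^ M‖ < 1 := by
      rw [norm_mul, norm_pow]
      calc ‖a‖ * ‖z‖ ^ M ≤ ‖a‖ * 1 := by
            gcongr
            exact pow_le_one₀ (norm_nonneg z) hz.le
        _ < 1 := by rw [mul_one]; exact ha
    have h1 := hasSum_deriv hf hc2 hw
    refine (Function.Injective.hasSum_iff hinj ?_).mp ?_
    · intro k hk
      rw [hrange] at hk
      simp [hD, hk]
    · have hcomp : ((fun k => D k * z ^ k) ∘ fun n : ℕ => M * n)
          = fun n : ℕ => ((n : ℂ) + 1) * c (n + 1) * (a * z ^ M) ^ n := by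
        funext n
        have hdvd : M ∣ M * n := Dvd.intro n rfl
        simp only [Function.comp_apply, hD, if_pos hdvd, Nat.mul_div_cancel_left n hM0, he]
        rw [pow_mul, mul_pow]
        ring
      rw [hcomp]
      exact h1
  have hdD : d = D := coeffs_unique hd hDcoeffs
  set V : ℕ → ℝ := fun n => ((n : ℝ) + 1) ^ 2 * ‖c (n + 1)‖ ^ 2 with hV
  have hVsum : Summable V := by
    have h := (summable_nat_add_iff 1).2 hc2
    refine h.congr fun n => ?_
    push_cast
    ring
  set T : ℕ → ℝ := fun n => ((M * n : ℕ) : ℝ) ^ 2 * ‖D (M * n)‖ ^ 2 with hT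
  have hDval : ∀ n, D (M * n) = e n * a ^ n := fun n => by
    simp [hD, Dvd.intro n rfl, Nat.mul_div_cancel_left n hM0]
  have hFle : ∀ n : ℕ, (M : ℝ) * n * ‖a‖ ^ n ≤ 1 := by
    intro n
    rcases Nat.eq_zero_or_pos n with h | h
    · simp [h]
    · have hMn : ((M * n : ℕ) : ℝ) ≤ ((M ^ n : ℕ) : ℝ) := by
        exact_mod_cast aux_nat M hM n h
      have hMpos : (0 : ℝ) < (M : ℝ) := by positivity
      have h1 : ‖a‖ ^ n ≤ (1 / (M : ℝ)) ^ n := pow_le_pow_left₀ (norm_nonneg a) haM n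
      calc (M : ℝ) * n * ‖a‖ ^ n ≤ (M : ℝ) * n * (1 / (M : ℝ)) ^ n := by
            have : (0:ℝ) ≤ (M : ℝ) * n := by positivity
            exact mul_le_mul_of_nonneg_left h1 this
        _ ≤ (M : ℝ) ^ n * (1 / (M : ℝ)) ^ n := by
            gcongr
            push_cast at hMn ⊢
            exact hMn
        _ = 1 := by
            rw [← mul_pow, mul_one_div, div_self (ne_of_gt hMpos), one_pow]
  have hnorme : ∀ n : ℕ, ‖e n‖ = ((n : ℝ) + 1) * ‖c (n + 1)‖ := by
    intro n
    rw [he]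
    simp only [norm_mul]
    congr 1
    rw [show ((n : ℂ) + 1) = ((n + 1 : ℕ) : ℂ) by push_cast; ring, Complex.norm_natCast]
    push_cast
    ring
  have hTle : ∀ n, T n ≤ V n := by
    intro n
    have hkey : (M : ℝ) * n * ‖a‖ ^ n ≤ 1 := hFle n
    have hTeq : T n = ((M : ℝ) * n * ‖a‖ ^ n) ^ 2 * (((n : ℝ) + 1) ^ 2 * ‖c (n + 1)‖ ^ 2) := by
      rw [hT]
      simp only [hDval n, norm_mul, norm_pow, hnorme n]
      push_cast
      ring
    have hVnn : (0 : ℝ) ≤ ((n : ℝ) + 1) ^ 2 * ‖c (n + 1)‖ ^ 2 := by positivity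
    have hprod : (0 : ℝ) ≤ (M : ℝ) * n * ‖a‖ ^ n := by positivity
    calc T n ≤ 1 ^ 2 * (((n : ℝ) + 1) ^ 2 * ‖c (n + 1)‖ ^ 2) := by
          rw [hTeq]
          gcongr
      _ = V n := by rw [hV]; ring
  have hTsum : Summable T := hVsum.of_nonneg_of_le (fun n => by positivity) hTle
  have htsumDT : (∑' k : ℕ, (k : ℝ) ^ 2 * ‖D k‖ ^ 2) = ∑' n : ℕ, T n := by
    refine (Function.Injective.tsum_eq hinj ?_).symm
    intro k hk
    rw [Function.mem_support] at hk
    rw [hrange]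
    by_contra h
    simp [hD, h] at hk
  have hD0 : D 0 = c 1 := by simp [hD, he]
  have hT0 : T 0 = 0 := by simp [hT]
  have step1 : S2sq d = ‖c 1‖ ^ 2 + ∑' n : ℕ, T n := by
    rw [hdD, S2sq, hD0, htsumDT]
  have step2 : (∑' n : ℕ, T n) = ∑' n : ℕ, T (n + 1) := by
    rw [Summable.tsum_eq_zero_add hTsum, hT0, zero_add]
  have step3 : (∑' n : ℕ, T (n + 1)) ≤ ∑' n : ℕ, V (n + 1) :=
    Summable.tsum_le_tsum (fun n => hTle _) ((summable_nat_add_iff 1).2 hTsum)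
      ((summable_nat_add_iff 1).2 hVsum)
  have step4 : ‖c 1‖ ^ 2 + (∑' n : ℕ, V (n + 1)) = ∑' n : ℕ, V n := by
    rw [Summable.tsum_eq_zero_add hVsum]
    have : V 0 = ‖c 1‖ ^ 2 := by rw [hV]; norm_num
    rw [this]
  have step5 : (∑' n : ℕ, V n) = ∑' n : ℕ, (n : ℝ) ^ 2 * ‖c n‖ ^ 2 := by
    rw [Summable.tsum_eq_zero_add hc2]
    have hf0 : ((0 : ℕ) : ℝ) ^ 2 * ‖c 0‖ ^ 2 = 0 := by norm_num
    rw [hf0, zero_add]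
    exact tsum_congr fun n => by rw [hV]; push_cast; ring
  calc S2sq d = ‖c 1‖ ^ 2 + ∑' n : ℕ, T (n + 1) := by rw [step1, step2]
    _ ≤ ‖c 1‖ ^ 2 + ∑' n : ℕ, V (n + 1) := by linarith
    _ = ∑' n : ℕ, (n : ℝ) ^ 2 * ‖c n‖ ^ 2 := by rw [step4, step5]
    _ ≤ S2sq c := le_add_of_nonneg_left (sq_nonneg _)

/-- For `φ(z) = a z^M` on `S²` with `M ≥ 2`: if `N = ‖D_φ‖` (the least constant bounding
the operator) then `N = 1` when `0 < |a| ≤ 1/M`, and `N > 1` when `1/M < |a| < 1`. -/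
theorem stmt10 (a : ℂ) (ha0 : a ≠ 0) (ha : ‖a‖ < 1) (M : ℕ) (hM : 2 ≤ M)
    (N : ℝ)
    (hN : IsLeast {C : ℝ | 0 ≤ C ∧ ∀ (f : ℂ → ℂ) (c d : ℕ → ℂ), HasCoeffs f c →
        Summable (fun n : ℕ => (n : ℝ) ^ 2 * ‖c n‖ ^ 2) →
        HasCoeffs (fun z => deriv f (a * z ^ M)) d →
        S2sq d ≤ C ^ 2 * S2sq c} N) :
    (‖a‖ ≤ 1 / (M : ℝ) → N = 1) ∧ (1 / (M : ℝ) < ‖a‖ → 1 < N) := by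
  have hM0 : 0 < M := by omega
  have hN0 : 0 ≤ N := hN.1.1
  have hge1 : 1 ≤ N := by
    set c1 : ℕ → ℂ := fun n => if n = 1 then 1 else 0 with hc1
    set d1 : ℕ → ℂ := fun n => if n = 0 then 1 else 0 with hd1
    have h1 : HasCoeffs (fun z : ℂ => z) c1 := by
      intro z hz
      have heq : (fun n : ℕ => c1 n * z ^ n) = fun n => if n = 1 then z else 0 := by
        funext n; by_cases hn : n = 1 <;> simp [hc1, hn]
      rw [heq]; exact hasSum_ite_eq 1 z
    have h2 : Summable (fun n : ℕ => (n : ℝ) ^ 2 * ‖c1 n‖ ^ 2) := by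
      apply summable_of_ne_finset_zero (s := {1})
      intro n hn
      simp only [Finset.mem_singleton] at hn
      simp [hc1, hn]
    have h3 : HasCoeffs (fun z => deriv (fun w : ℂ => w) (a * z ^ M)) d1 := by
      intro z hz
      show HasSum (fun n => d1 n * z ^ n) (deriv (fun w : ℂ => w) (a * z ^ M))
      have hdd : deriv (fun w : ℂ => w) (a * z ^ M) = 1 := by simp
      rw [hdd]
      have heq : (fun n : ℕ => d1 n * z ^ n) = fun n => if n = 0 then 1 else 0 := by
        funext n; by_cases hn : n = 0 <;> simp [hd1, hn]
      rw [heq]; exact hasSum_ite_eq 0 1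
    have hineq := hN.1.2 (fun z => z) c1 d1 h1 h2 h3
    have hSc : S2sq c1 = 1 := by
      rw [S2sq, tsum_eq_single 1 (fun n hn => by simp [hc1, hn])]
      simp [hc1]
    have hSd : S2sq d1 = 1 := by
      rw [S2sq, tsum_eq_single 0 (fun n hn => by simp [hd1, hn])]
      simp [hd1]
    rw [hSc, hSd, mul_one] at hineq
    nlinarith
  constructor
  · intro haM
    have hle : N ≤ 1 := by
      apply hN.2
      refine ⟨zero_le_one, fun f c d hfc hs hdc => ?_⟩
      rw [one_pow, one_mul]
      exact key_le hM ha haM f c d hfc hs hdc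
    linarith
  · intro haM
    set c2 : ℕ → ℂ := fun n => if n = 2 then 1 else 0 with hc2
    set d2 : ℕ → ℂ := fun n => if n = M then 2 * a else 0 with hd2
    have h1 : HasCoeffs (fun z : ℂ => z ^ 2) c2 := by
      intro z hz
      have heq : (fun n : ℕ => c2 n * z ^ n) = fun n => if n = 2 then z ^ 2 else 0 := by
        funext n; by_cases hn : n = 2 <;> simp [hc2, hn]
      rw [heq]; exact hasSum_ite_eq 2 (z ^ 2)
    have h2 : Summable (fun n : ℕ => (n : ℝ) ^ 2 * ‖c2 n‖ ^ 2) := by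
      apply summable_of_ne_finset_zero (s := {2})
      intro n hn
      simp only [Finset.mem_singleton] at hn
      simp [hc2, hn]
    have h3 : HasCoeffs (fun z => deriv (fun w : ℂ => w ^ 2) (a * z ^ M)) d2 := by
      intro z hz
      show HasSum (fun n => d2 n * z ^ n) (deriv (fun w : ℂ => w ^ 2) (a * z ^ M))
      have hdd : deriv (fun w : ℂ => w ^ 2) (a * z ^ M) = 2 * (a * z ^ M) := by
        simp [deriv_pow]
      rw [hdd]
      have heq : (fun n : ℕ => d2 n * z ^ n)
          = fun n => if n = M then 2 * (a * z ^ M) else 0 := by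
        funext n
        by_cases hn : n = M
        · simp [hd2, hn]; ring
        · simp [hd2, hn]
      rw [heq]; exact hasSum_ite_eq M (2 * (a * z ^ M))
    have hineq := hN.1.2 (fun z : ℂ => z ^ 2) c2 d2 h1 h2 h3
    have hSc : S2sq c2 = 4 := by
      rw [S2sq, tsum_eq_single 2 (fun n hn => by simp [hc2, hn])]
      norm_num [hc2]
    have hSd : S2sq d2 = (M : ℝ) ^ 2 * (2 * ‖a‖) ^ 2 := by
      rw [S2sq, tsum_eq_single M (fun n hn => by simp [hd2, hn])]
      have hd0 : d2 0 = 0 := by simp [hd2, show (0 : ℕ) ≠ M by omega]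
      have hnorm : ‖(2 : ℂ) * a‖ = 2 * ‖a‖ := by
        rw [norm_mul]; norm_num
      have hdM : d2 M = 2 * a := by simp [hd2]
      rw [hd0, hdM, hnorm]
      simp
    have hMa : 1 < (M : ℝ) * ‖a‖ := by
      have hMpos : (0 : ℝ) < (M : ℝ) := by positivity
      have := (div_lt_iff₀ hMpos).mp haM
      nlinarith
    rw [hSc, hSd] at hineq
    nlinarith [hMa, hN0, norm_nonneg a, hineq]
end
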